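/- Let M ∈ ℝ^{q×q} satisfy |M_{ij} − 1/q| ≤ 1/(2q) for all i,j, and ε := max{‖Me − e‖_∞, ‖Mᵀe − e‖_∞} ≤ 1/(48√q) where e is the all-ones vector. If D₁, D₂ are (positive) diagonal matrices such that D₂MD₁ is doubly stochastic, then ‖D₂ ⊗ D₁ − I‖₂ ≤ 96√q·ε, where D₂ ⊗ D₁ is the Kronecker product and I the identity on ℝ^{q²}. -/

import Mathlib

open Matrix Finset Kronecker

lemma aux_pt (x : ℝ) (h : (1:ℝ)/8 ≤ Real.exp x) : x^2/8 ≤ x * (Real.exp x - 1) := by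
  rcases le_or_gt 0 x with hx | hx
  · nlinarith [Real.add_one_le_exp x]
  · have hu0 : 0 < Real.exp x := Real.exp_pos x
    have h1 : (-x) + 1 ≤ (Real.exp x)⁻¹ := by
      have := Real.add_one_le_exp (-x); rwa [Real.exp_neg] at this
    have h2 : Real.exp x - 1 ≤ x * Real.exp x := by
      have := mul_le_mul_of_nonneg_left h1 hu0.le
      rw [mul_inv_cancel₀ hu0.ne'] at this; nlinarith
    nlinarith [mul_le_mul_of_nonpos_left h2 hx.le, sq_nonneg x,
      mul_nonneg (sq_nonneg x) hu0.le]

lemma aux_exp (x : ℝ) (h : |x| ≤ 1) : |Real.exp x - 1| ≤ 3 * |x| := by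
  rcases le_or_gt 0 x with hx | hx
  · rw [abs_of_nonneg hx] at h ⊢
    rw [abs_of_nonneg (by nlinarith [Real.add_one_le_exp x] : (0:ℝ) ≤ Real.exp x - 1)]
    have h1 : Real.exp x ≤ Real.exp 1 := Real.exp_le_exp.2 h
    have h2 : Real.exp 1 < 3 := by have := Real.exp_one_lt_d9; linarith
    have hu0 : 0 < Real.exp x := Real.exp_pos x
    have h3 : (-x) + 1 ≤ (Real.exp x)⁻¹ := by
      have := Real.add_one_le_exp (-x); rwa [Real.exp_neg] at this
    have h4 : Real.exp x - 1 ≤ x * Real.exp x := by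
      have := mul_le_mul_of_nonneg_left h3 hu0.le
      rw [mul_inv_cancel₀ hu0.ne'] at this; nlinarith
    nlinarith
  · rw [abs_of_neg hx] at h ⊢
    have h1 : Real.exp x - 1 ≤ 0 := by
      nlinarith [Real.exp_lt_one_iff.2 hx]
    rw [abs_of_nonpos h1]
    nlinarith [Real.add_one_le_exp x]

lemma aux_cs {q : ℕ} (f : Fin q → ℝ) : (∑ i, |f i|)^2 ≤ q * ∑ i, (f i)^2 := by
  have h := Finset.sum_mul_sq_le_sq_mul_sq Finset.univ (fun _ => (1:ℝ)) (fun i => |f i|)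
  simpa [sq_abs, Finset.card_univ] using h

set_option maxHeartbeats 1000000 in
lemma sinkhorn_key (q : ℕ) (hq : 0 < q) (M : Matrix (Fin q) (Fin q) ℝ)
    (hMl : ∀ i j, 1/(2*(q:ℝ)) ≤ M i j) (hMu : ∀ i j, M i j ≤ 3/(2*(q:ℝ)))
    (eps : ℝ) (heps0 : 0 ≤ eps)
    (hrow : ∀ i, |(∑ j, M i j) - 1| ≤ eps)
    (hcol : ∀ j, |(∑ i, M i j) - 1| ≤ eps)
    (heps : Real.sqrt q * eps ≤ 1/48)
    (d₁ d₂ : Fin q → ℝ) (hd₁ : ∀ i, 0 < d₁ i) (hd₂ : ∀ i, 0 < d₂ i)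
    (hSrow : ∀ i, ∑ j, d₂ i * M i j * d₁ j = 1)
    (hScol : ∀ j, ∑ i, d₂ i * M i j * d₁ j = 1) :
    ∀ i j, |d₂ i * d₁ j - 1| ≤ 96 * Real.sqrt q * eps := by
  have hq0 : (0:ℝ) < q := by exact_mod_cast hq
  have hne : (Finset.univ : Finset (Fin q)).Nonempty := ⟨⟨0, hq⟩, mem_univ _⟩
  have hfe : (2*(q:ℝ)) * (3/(2*(q:ℝ))) = 3 := by field_simp
  have hfe2 : (2*(q:ℝ)) * (1/(2*(q:ℝ))) = 1 := by field_simp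
  have hMu₂ : ∀ i j, (2*(q:ℝ)) * M i j ≤ 3 := fun i j => by
    have := mul_le_mul_of_nonneg_left (hMu i j) (by positivity : (0:ℝ) ≤ 2*(q:ℝ))
    linarith [hfe]
  have hMl₂ : ∀ i j, (1:ℝ) ≤ (2*(q:ℝ)) * M i j := fun i j => by
    have := mul_le_mul_of_nonneg_left (hMl i j) (by positivity : (0:ℝ) ≤ 2*(q:ℝ))
    linarith [hfe2]
  set U := ∑ i, d₂ i with hUdef
  set V := ∑ j, d₁ j with hVdef
  have hU : 0 < U := Finset.sum_pos (fun i _ => hd₂ i) hne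
  have hV : 0 < V := Finset.sum_pos (fun j _ => hd₁ j) hne
  -- crude lower bounds
  have hd₂lb : ∀ i, 2*(q:ℝ) ≤ 3 * (d₂ i * V) := by
    intro i
    have h2 : 2*(q:ℝ) = ∑ j, (2*(q:ℝ)) * (d₂ i * M i j * d₁ j) := by
      rw [← Finset.mul_sum, hSrow i, mul_one]
    have h3 : ∑ j, (2*(q:ℝ)) * (d₂ i * M i j * d₁ j) ≤ ∑ j, (3 * d₂ i) * d₁ j := by
      refine Finset.sum_le_sum fun j _ => ?_
      nlinarith [mul_le_mul_of_nonneg_left (hMu₂ i j)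
        (mul_nonneg (hd₂ i).le (hd₁ j).le)]
    have h4 : ∑ j, 3 * d₂ i * d₁ j = 3 * d₂ i * V := (Finset.mul_sum _ _ _).symm
    rw [h4] at h3
    linarith [h2, h3]
  have hd₁lb : ∀ j, 2*(q:ℝ) ≤ 3 * (d₁ j * U) := by
    intro j
    have h2 : 2*(q:ℝ) = ∑ i, (2*(q:ℝ)) * (d₂ i * M i j * d₁ j) := by
      rw [← Finset.mul_sum, hScol j, mul_one]
    have h3 : ∑ i, (2*(q:ℝ)) * (d₂ i * M i j * d₁ j) ≤ ∑ i, (3 * d₁ j) * d₂ i := by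
      refine Finset.sum_le_sum fun i _ => ?_
      nlinarith [mul_le_mul_of_nonneg_left (hMu₂ i j)
        (mul_nonneg (hd₂ i).le (hd₁ j).le)]
    have h4 : ∑ i, 3 * d₁ j * d₂ i = 3 * d₁ j * U := (Finset.mul_sum _ _ _).symm
    rw [h4] at h3
    linarith [h2, h3]
  have hUV : U * V ≤ 2*(q:ℝ)^2 := by
    have h1 : 2*(q:ℝ)*(q:ℝ) = ∑ i : Fin q, ∑ j, (2*(q:ℝ)) * (d₂ i * M i j * d₁ j) := by
      have : ∀ i : Fin q, ∑ j, (2*(q:ℝ)) * (d₂ i * M i j * d₁ j) = 2*(q:ℝ) := fun i => by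
        rw [← Finset.mul_sum, hSrow i, mul_one]
      simp only [this, Finset.sum_const, Finset.card_univ, Fintype.card_fin, nsmul_eq_mul]
      ring
    have h2 : ∑ i : Fin q, ∑ j, d₂ i * d₁ j ≤
        ∑ i : Fin q, ∑ j, (2*(q:ℝ)) * (d₂ i * M i j * d₁ j) := by
      refine Finset.sum_le_sum fun i _ => Finset.sum_le_sum fun j _ => ?_
      nlinarith [mul_le_mul_of_nonneg_left (hMl₂ i j)
        (mul_nonneg (hd₂ i).le (hd₁ j).le)]
    have h3 : ∑ i : Fin q, ∑ j, d₂ i * d₁ j = U * V := by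
      rw [hUdef, hVdef, Finset.sum_mul]
      exact Finset.sum_congr rfl fun i _ => by rw [Finset.mul_sum]
    nlinarith [h1, h2, h3]
  have hcrude : ∀ i j, (1:ℝ)/8 ≤ d₂ i * d₁ j := by
    intro i j
    have h1 := hd₂lb i
    have h2 := hd₁lb j
    have h4 : (2*(q:ℝ)) * (2*(q:ℝ)) ≤ (3 * (d₂ i * V)) * (3 * (d₁ j * U)) :=
      mul_le_mul h1 h2 (by linarith) (by nlinarith [mul_pos (hd₂ i) hV])
    nlinarith [mul_le_mul_of_nonneg_left hUV
      (by nlinarith [mul_pos (hd₂ i) (hd₁ j)] : (0:ℝ) ≤ 9 * (d₂ i * d₁ j)), mul_pos hq0 hq0,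
      mul_pos (hd₂ i) (hd₁ j)]
  -- logs
  set sb : ℝ := (∑ i, Real.log (d₂ i)) / q with hsbdef
  set σ : Fin q → ℝ := fun i => Real.log (d₂ i) - sb with hσdef
  set τ : Fin q → ℝ := fun j => Real.log (d₁ j) + sb with hτdef
  have hexp : ∀ i j, Real.exp (σ i + τ j) = d₂ i * d₁ j := by
    intro i j
    rw [hσdef, hτdef]
    simp only
    rw [show Real.log (d₂ i) - sb + (Real.log (d₁ j) + sb)
        = Real.log (d₂ i) + Real.log (d₁ j) by ring,
      Real.exp_add, Real.exp_log (hd₂ i), Real.exp_log (hd₁ j)]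
  have hσ0 : ∑ i, σ i = 0 := by
    rw [hσdef]
    simp only
    rw [Finset.sum_sub_distrib, Finset.sum_const, Finset.card_univ, Fintype.card_fin,
      nsmul_eq_mul, hsbdef]
    field_simp
    ring
  -- key identity
  have hid : ∑ i, ∑ j, M i j * ((σ i + τ j) * (Real.exp (σ i + τ j) - 1))
      = (∑ i, σ i * (1 - ∑ j, M i j)) + (∑ j, τ j * (1 - ∑ i, M i j)) := by
    have e1 : ∀ i j, M i j * ((σ i + τ j) * (Real.exp (σ i + τ j) - 1))
        = σ i * (d₂ i * M i j * d₁ j) + τ j * (d₂ i * M i j * d₁ j)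
          - σ i * M i j - τ j * M i j := by
      intro i j
      rw [hexp i j]; ring
    have A1 : ∑ i : Fin q, ∑ j, σ i * (d₂ i * M i j * d₁ j) = ∑ i, σ i := by
      refine Finset.sum_congr rfl fun i _ => ?_
      rw [← Finset.mul_sum, hSrow i, mul_one]
    have A2 : ∑ i : Fin q, ∑ j, τ j * (d₂ i * M i j * d₁ j) = ∑ j, τ j := by
      rw [Finset.sum_comm]
      refine Finset.sum_congr rfl fun j _ => ?_
      rw [← Finset.mul_sum, hScol j, mul_one]
    have A3 : ∑ i : Fin q, ∑ j, σ i * M i j = ∑ i, σ i * (∑ j, M i j) :=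
      Finset.sum_congr rfl fun i _ => (Finset.mul_sum _ _ _).symm
    have A4 : ∑ i : Fin q, ∑ j, τ j * M i j = ∑ j, τ j * (∑ i, M i j) := by
      rw [Finset.sum_comm]
      exact Finset.sum_congr rfl fun j _ => (Finset.mul_sum _ _ _).symm
    calc ∑ i, ∑ j, M i j * ((σ i + τ j) * (Real.exp (σ i + τ j) - 1))
        = ∑ i : Fin q, ∑ j, (σ i * (d₂ i * M i j * d₁ j) + τ j * (d₂ i * M i j * d₁ j)
          - σ i * M i j - τ j * M i j) :=
          Finset.sum_congr rfl fun i _ => Finset.sum_congr rfl fun j _ => e1 i j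
      _ = (∑ i : Fin q, ∑ j, σ i * (d₂ i * M i j * d₁ j))
          + (∑ i : Fin q, ∑ j, τ j * (d₂ i * M i j * d₁ j))
          - (∑ i : Fin q, ∑ j, σ i * M i j) - (∑ i : Fin q, ∑ j, τ j * M i j) := by
          simp only [Finset.sum_add_distrib, Finset.sum_sub_distrib]
      _ = (∑ i, σ i) + (∑ j, τ j) - (∑ i, σ i * (∑ j, M i j))
          - (∑ j, τ j * (∑ i, M i j)) := by rw [A1, A2, A3, A4]
      _ = (∑ i, σ i * (1 - ∑ j, M i j)) + (∑ j, τ j * (1 - ∑ i, M i j)) := by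
          simp only [mul_sub, mul_one, Finset.sum_sub_distrib]; ring
  -- upper bound on RHS of identity
  have hup : (∑ i, σ i * (1 - ∑ j, M i j)) + (∑ j, τ j * (1 - ∑ i, M i j))
      ≤ eps * ((∑ i, |σ i|) + (∑ j, |τ j|)) := by
    have h1 : ∑ i, σ i * (1 - ∑ j, M i j) ≤ ∑ i, |σ i| * eps := by
      refine Finset.sum_le_sum fun i _ => ?_
      calc σ i * (1 - ∑ j, M i j) ≤ |σ i * (1 - ∑ j, M i j)| := le_abs_self _
        _ = |σ i| * |1 - ∑ j, M i j| := abs_mul _ _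
        _ ≤ |σ i| * eps := by
            refine mul_le_mul_of_nonneg_left ?_ (abs_nonneg _)
            rw [abs_sub_comm]; exact hrow i
    have h2 : ∑ j, τ j * (1 - ∑ i, M i j) ≤ ∑ j, |τ j| * eps := by
      refine Finset.sum_le_sum fun j _ => ?_
      calc τ j * (1 - ∑ i, M i j) ≤ |τ j * (1 - ∑ i, M i j)| := le_abs_self _
        _ = |τ j| * |1 - ∑ i, M i j| := abs_mul _ _
        _ ≤ |τ j| * eps := by
            refine mul_le_mul_of_nonneg_left ?_ (abs_nonneg _)
            rw [abs_sub_comm]; exact hcol j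
    have h3 : ∑ i, |σ i| * eps = (∑ i, |σ i|) * eps := (Finset.sum_mul _ _ _).symm
    have h4 : ∑ j, |τ j| * eps = (∑ j, |τ j|) * eps := (Finset.sum_mul _ _ _).symm
    nlinarith [h1, h2, h3, h4]
  -- lower bound on LHS of identity
  have hlo : ∀ i j, (σ i + τ j)^2 / (16*(q:ℝ))
      ≤ M i j * ((σ i + τ j) * (Real.exp (σ i + τ j) - 1)) := by
    intro i j
    have hpt := aux_pt (σ i + τ j) (by rw [hexp i j]; exact hcrude i j)
    have hnn : 0 ≤ (σ i + τ j) * (Real.exp (σ i + τ j) - 1) :=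
      le_trans (by positivity) hpt
    have hM2 := hMl₂ i j
    have key : (2*(q:ℝ)) * ((σ i + τ j)^2 / (16*(q:ℝ)))
        ≤ (2*(q:ℝ) * M i j) * ((σ i + τ j) * (Real.exp (σ i + τ j) - 1)) := by
      have e2 : (2*(q:ℝ)) * ((σ i + τ j)^2 / (16*(q:ℝ))) = (σ i + τ j)^2 / 8 := by
        field_simp; ring
      rw [e2]
      calc (σ i + τ j)^2 / 8 ≤ (σ i + τ j) * (Real.exp (σ i + τ j) - 1) := hpt
        _ = 1 * ((σ i + τ j) * (Real.exp (σ i + τ j) - 1)) := (one_mul _).symm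
        _ ≤ (2*(q:ℝ) * M i j) * ((σ i + τ j) * (Real.exp (σ i + τ j) - 1)) :=
            mul_le_mul_of_nonneg_right hM2 hnn
    have e3 : (2*(q:ℝ) * M i j) * ((σ i + τ j) * (Real.exp (σ i + τ j) - 1))
        = (2*(q:ℝ)) * (M i j * ((σ i + τ j) * (Real.exp (σ i + τ j) - 1))) := by ring
    rw [e3] at key
    exact le_of_mul_le_mul_left key (by linarith)
  have hsumlo : (∑ i : Fin q, ∑ j, (σ i + τ j)^2) / (16*(q:ℝ))
      ≤ ∑ i : Fin q, ∑ j, M i j * ((σ i + τ j) * (Real.exp (σ i + τ j) - 1)) := by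
    rw [Finset.sum_div]
    refine Finset.sum_le_sum fun i _ => ?_
    rw [Finset.sum_div]
    exact Finset.sum_le_sum fun j _ => hlo i j
  -- expand the double sum of squares
  have hX2 : ∑ i : Fin q, ∑ j, (σ i + τ j)^2
      = (q:ℝ) * (∑ i, (σ i)^2) + (q:ℝ) * (∑ j, (τ j)^2) := by
    have h1 : ∀ i : Fin q, ∑ j, (σ i + τ j)^2
        = (q:ℝ) * (σ i)^2 + 2 * σ i * (∑ j, τ j) + ∑ j, (τ j)^2 := by
      intro i
      have : ∀ j, (σ i + τ j)^2 = (σ i)^2 + (2 * σ i) * τ j + (τ j)^2 := fun j => by ring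
      rw [Finset.sum_congr rfl fun j _ => this j]
      rw [Finset.sum_add_distrib, Finset.sum_add_distrib, Finset.sum_const,
        Finset.card_univ, Fintype.card_fin, nsmul_eq_mul, ← Finset.mul_sum]
    rw [Finset.sum_congr rfl fun i _ => h1 i]
    have h2 : ∑ i : Fin q, 2 * σ i = 0 := by rw [← Finset.mul_sum, hσ0, mul_zero]
    rw [Finset.sum_add_distrib, Finset.sum_add_distrib, Finset.sum_const,
      Finset.card_univ, Fintype.card_fin, nsmul_eq_mul, ← Finset.mul_sum, ← Finset.sum_mul, h2]
    ring
  -- Cauchy-Schwarz and conclusion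
  have hcs1 : (∑ i, |σ i|)^2 ≤ (q:ℝ) * ∑ i, (σ i)^2 := aux_cs σ
  have hcs2 : (∑ j, |τ j|)^2 ≤ (q:ℝ) * ∑ j, (τ j)^2 := aux_cs τ
  have ha : 0 ≤ ∑ i, |σ i| := Finset.sum_nonneg fun i _ => abs_nonneg _
  have hb : 0 ≤ ∑ j, |τ j| := Finset.sum_nonneg fun j _ => abs_nonneg _
  have hSs : 0 ≤ ∑ i, (σ i)^2 := Finset.sum_nonneg fun i _ => sq_nonneg _
  have hSt : 0 ≤ ∑ j, (τ j)^2 := Finset.sum_nonneg fun j _ => sq_nonneg _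
  have hchain : ((q:ℝ) * (∑ i, (σ i)^2) + (q:ℝ) * (∑ j, (τ j)^2)) / (16*(q:ℝ))
      ≤ eps * ((∑ i, |σ i|) + (∑ j, |τ j|)) := by
    rw [← hX2]
    exact hsumlo.trans (hid.le.trans hup)
  have hT : (∑ i, (σ i)^2) + (∑ j, (τ j)^2)
      ≤ 16 * eps * ((∑ i, |σ i|) + (∑ j, |τ j|)) := by
    have e : ((q:ℝ) * (∑ i, (σ i)^2) + (q:ℝ) * (∑ j, (τ j)^2)) / (16*(q:ℝ))
        = ((∑ i, (σ i)^2) + (∑ j, (τ j)^2)) / 16 := by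
      field_simp
    rw [e] at hchain
    linarith
  have hT2 : (∑ i, (σ i)^2) + (∑ j, (τ j)^2) ≤ 512 * (q:ℝ) * eps^2 := by
    set A := ∑ i, |σ i|
    set B := ∑ j, |τ j|
    set Ss := ∑ i, (σ i)^2
    set St := ∑ j, (τ j)^2
    have hsq : Ss + St ≤ 16 * eps * (A + B) := hT
    have h2 : (Ss + St)^2 ≤ (16 * eps * (A + B))^2 := by
      have hnn : 0 ≤ Ss + St := by linarith
      nlinarith [hsq, hnn]
    nlinarith [h2, hcs1, hcs2, sq_nonneg (A - B), sq_nonneg eps, heps0, hq0,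
      mul_nonneg (mul_nonneg (by norm_num : (0:ℝ) ≤ 512) hq0.le) (sq_nonneg eps),
      mul_le_mul_of_nonneg_left hcs1 (sq_nonneg eps),
      mul_le_mul_of_nonneg_left hcs2 (sq_nonneg eps), hSs, hSt]
  intro i j
  have h1 : (σ i)^2 ≤ ∑ k, (σ k)^2 :=
    Finset.single_le_sum (fun k _ => sq_nonneg (σ k)) (Finset.mem_univ i)
  have h2 : (τ j)^2 ≤ ∑ k, (τ k)^2 :=
    Finset.single_le_sum (fun k _ => sq_nonneg (τ k)) (Finset.mem_univ j)
  have hx2 : (σ i + τ j)^2 ≤ 1024 * (q:ℝ) * eps^2 := by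
    nlinarith [sq_nonneg (σ i - τ j), h1, h2, hT2]
  have hB2 : (32 * Real.sqrt q * eps)^2 = 1024 * (q:ℝ) * eps^2 := by
    rw [mul_pow, mul_pow, Real.sq_sqrt hq0.le]; ring
  have hBnn : 0 ≤ 32 * Real.sqrt q * eps :=
    mul_nonneg (mul_nonneg (by norm_num) (Real.sqrt_nonneg _)) heps0
  have habs : |σ i + τ j| ≤ 32 * Real.sqrt q * eps := by
    nlinarith [hx2, hB2, sq_abs (σ i + τ j), abs_nonneg (σ i + τ j), hBnn]
  have hone : |σ i + τ j| ≤ 1 := by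
    have e32 : 32 * Real.sqrt q * eps = 32 * (Real.sqrt q * eps) := by ring
    have : 32 * (Real.sqrt q * eps) ≤ 32 * (1/48) := by linarith [heps]
    calc |σ i + τ j| ≤ 32 * Real.sqrt q * eps := habs
      _ = 32 * (Real.sqrt q * eps) := e32
      _ ≤ 32 * (1/48) := this
      _ ≤ 1 := by norm_num
  have hexpb := aux_exp (σ i + τ j) hone
  rw [hexp i j] at hexpb
  calc |d₂ i * d₁ j - 1| ≤ 3 * |σ i + τ j| := hexpb
    _ ≤ 3 * (32 * Real.sqrt q * eps) := by linarith [habs]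
    _ = 96 * Real.sqrt q * eps := by ring


/-- Local stability of Sinkhorn (matrix) scaling.  Let `M ∈ ℝ^{q×q}` satisfy
`|M_{ij} − 1/q| ≤ 1/(2q)` and `ε := max{‖Me − e‖_∞, ‖Mᵀe − e‖_∞} ≤ 1/(48√q)` (stated via an
upper bound `eps` on all the row- and column-sum deviations).  If `D₁ = diag d₁`,
`D₂ = diag d₂` are positive diagonal matrices such that `D₂ M D₁` is doubly stochastic, then
`‖D₂ ⊗ D₁ − I‖₂ ≤ 96 √q ε` (the spectral-norm bound stated through quadratic forms, since
`D₂ ⊗ D₁ − I` is symmetric). -/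
theorem sinkhorn_scaling_stability (q : ℕ) (hq : 0 < q) (M : Matrix (Fin q) (Fin q) ℝ)
    (hM : ∀ i j, |M i j - 1 / (q : ℝ)| ≤ 1 / (2 * (q : ℝ)))
    (eps : ℝ)
    (hrow : ∀ i, |(∑ j, M i j) - 1| ≤ eps)
    (hcol : ∀ j, |(∑ i, M i j) - 1| ≤ eps)
    (heps : eps ≤ 1 / (48 * Real.sqrt q))
    (d₁ d₂ : Fin q → ℝ) (hd₁ : ∀ i, 0 < d₁ i) (hd₂ : ∀ i, 0 < d₂ i)
    (hDSnonneg : ∀ i j, 0 ≤ (Matrix.diagonal d₂ * M * Matrix.diagonal d₁) i j)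
    (hDSrow : ∀ i, ∑ j, (Matrix.diagonal d₂ * M * Matrix.diagonal d₁) i j = 1)
    (hDScol : ∀ j, ∑ i, (Matrix.diagonal d₂ * M * Matrix.diagonal d₁) i j = 1) :
    ∀ v : Fin q × Fin q → ℝ,
      |∑ p, ∑ p', v p * ((Matrix.diagonal d₂ ⊗ₖ Matrix.diagonal d₁ - 1) p p') * v p'| ≤
        96 * Real.sqrt q * eps * ∑ p, (v p) ^ 2 := by
  have hq0 : (0:ℝ) < q := by exact_mod_cast hq
  have heps0 : 0 ≤ eps := le_trans (abs_nonneg _) (hrow ⟨0, hq⟩)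
  simp only [Matrix.mul_diagonal, Matrix.diagonal_mul] at hDSrow hDScol
  have hMl : ∀ i j, 1/(2*(q:ℝ)) ≤ M i j := by
    intro i j
    have h := abs_le.1 (hM i j)
    have e : (1:ℝ)/(q:ℝ) - 1/(2*(q:ℝ)) = 1/(2*(q:ℝ)) := by field_simp; ring
    linarith [h.1]
  have hMu : ∀ i j, M i j ≤ 3/(2*(q:ℝ)) := by
    intro i j
    have h := abs_le.1 (hM i j)
    have e : (1:ℝ)/(q:ℝ) + 1/(2*(q:ℝ)) = 3/(2*(q:ℝ)) := by field_simp; ring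
    linarith [h.2]
  have hsqpos : 0 < Real.sqrt q := Real.sqrt_pos.2 hq0
  have heps' : Real.sqrt q * eps ≤ 1/48 := by
    have h := mul_le_mul_of_nonneg_left heps hsqpos.le
    have e : Real.sqrt q * (1/(48 * Real.sqrt q)) = 1/48 := by field_simp
    linarith
  have key := sinkhorn_key q hq M hMl hMu eps heps0 hrow hcol heps' d₁ d₂ hd₁ hd₂
    hDSrow hDScol
  intro v
  have hker : ∀ p p' : Fin q × Fin q,
      ((Matrix.diagonal d₂ ⊗ₖ Matrix.diagonal d₁ - 1) p p')
        = Matrix.diagonal (fun p : Fin q × Fin q => d₂ p.1 * d₁ p.2 - 1) p p' := by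
    intro p p'
    rw [Matrix.sub_apply, Matrix.diagonal_kronecker_diagonal]
    by_cases h : p = p'
    · subst h; simp [Matrix.diagonal_apply_eq, Matrix.one_apply_eq]
    · simp [Matrix.diagonal_apply_ne _ h, Matrix.one_apply_ne h]
  have hform : ∑ p, ∑ p', v p * ((Matrix.diagonal d₂ ⊗ₖ Matrix.diagonal d₁ - 1) p p') * v p'
      = ∑ p, (d₂ p.1 * d₁ p.2 - 1) * (v p)^2 := by
    refine Finset.sum_congr rfl fun p _ => ?_
    rw [Finset.sum_eq_single p]
    · rw [hker p p, Matrix.diagonal_apply_eq]; ring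
    · intro p' _ hne
      rw [hker p p', Matrix.diagonal_apply_ne _ (Ne.symm hne)]
      ring
    · intro h; exact absurd (Finset.mem_univ p) h
  rw [hform]
  calc |∑ p, (d₂ p.1 * d₁ p.2 - 1) * (v p)^2|
      ≤ ∑ p, |(d₂ p.1 * d₁ p.2 - 1) * (v p)^2| := Finset.abs_sum_le_sum_abs _ _
    _ = ∑ p, |d₂ p.1 * d₁ p.2 - 1| * (v p)^2 := by
        refine Finset.sum_congr rfl fun p _ => ?_
        rw [abs_mul, abs_of_nonneg (sq_nonneg (v p))]
    _ ≤ ∑ p, (96 * Real.sqrt q * eps) * (v p)^2 :=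
        Finset.sum_le_sum fun p _ => mul_le_mul_of_nonneg_right (key p.1 p.2) (sq_nonneg _)
    _ = 96 * Real.sqrt q * eps * ∑ p, (v p)^2 := (Finset.mul_sum _ _ _).symm
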